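/- Let Y be a real-valued random variable with finite fourth moment, 0 < E[Y⁴], and let C = E[Y]. Then E[|Y| · 1{Y ≤ 0}] ≥ (1/2) · ( (E[Y²]³ / E[Y⁴])^{1/2} − C ). -/

import Mathlib

open MeasureTheory ProbabilityTheory
open scoped ENNReal BigOperators

/-- Lower bound on the negative-part first moment (equation (3.5) in the paper):
`E[|Y|·1{Y ≤ 0}] ≥ (1/2)·((E[Y²]³/E[Y⁴])^{1/2} − E[Y])`. -/
theorem negative_part_lower_bound
    {Ω : Type*} [MeasurableSpace Ω] (μ : Measure Ω) [IsProbabilityMeasure μ]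
    (Y : Ω → ℝ)
    (hY1 : Integrable Y μ)
    (hY2 : Integrable (fun ω => Y ω ^ 2) μ)
    (hY3 : Integrable (fun ω => Y ω ^ 3) μ)
    (hY4 : Integrable (fun ω => Y ω ^ 4) μ)
    (h4pos : 0 < ∫ ω, Y ω ^ 4 ∂μ) :
    (1 / 2) * (((∫ ω, Y ω ^ 2 ∂μ) ^ 3 / ∫ ω, Y ω ^ 4 ∂μ) ^ ((1 : ℝ) / 2) - ∫ ω, Y ω ∂μ)
      ≤ ∫ ω, |Y ω| * Set.indicator {ω' | Y ω' ≤ 0} (fun _ => (1 : ℝ)) ω ∂μ := by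
  have hconj : (2 : ℝ).HolderConjugate 2 := ⟨by norm_num, by norm_num, by norm_num⟩
  have h2 : (ENNReal.ofReal (2:ℝ)) = 2 := by norm_num
  have hr2 : ∀ x : ℝ, x ^ (2:ℝ) = x ^ (2:ℕ) := fun x => by
    rw [show (2:ℝ) = ((2:ℕ):ℝ) by norm_num, Real.rpow_natCast]
  set A := ∫ ω, |Y ω| ∂μ with hA
  set B := ∫ ω, Y ω ^ 2 ∂μ with hB
  set T := ∫ ω, |Y ω| ^ 3 ∂μ with hT
  set D := ∫ ω, Y ω ^ 4 ∂μ with hD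
  have hAabs : Integrable (fun ω => |Y ω|) μ := hY1.abs
  have hT3 : Integrable (fun ω => |Y ω| ^ 3) μ := by
    refine hY3.abs.congr (Filter.Eventually.of_forall fun ω => ?_)
    simp [abs_pow]
  have hAnn : 0 ≤ A := integral_nonneg fun ω => abs_nonneg _
  have hBnn : 0 ≤ B := integral_nonneg fun ω => sq_nonneg _
  have hTnn : 0 ≤ T := integral_nonneg fun ω => pow_nonneg (abs_nonneg _) _
  have hDnn : 0 ≤ D := le_of_lt h4pos
  -- CS2 : T² ≤ B * D
  have hCS2 : T ^ 2 ≤ B * D := by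
    have hf : MemLp (fun ω => |Y ω|) (ENNReal.ofReal 2) μ := by
      rw [h2, memLp_two_iff_integrable_sq hAabs.aestronglyMeasurable]
      exact hY2.congr (Filter.Eventually.of_forall fun ω => by simp [sq_abs])
    have hg : MemLp (fun ω => Y ω ^ 2) (ENNReal.ofReal 2) μ := by
      rw [h2, memLp_two_iff_integrable_sq hY2.aestronglyMeasurable]
      exact hY4.congr (Filter.Eventually.of_forall fun ω => by ring)
    have h := integral_mul_le_Lp_mul_Lq_of_nonneg hconj
      (Filter.Eventually.of_forall fun ω => abs_nonneg _)
      (Filter.Eventually.of_forall fun ω => sq_nonneg _) hf hg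
    have hL : ∫ ω, |Y ω| * Y ω ^ 2 ∂μ = T := by
      refine integral_congr_ae (Filter.Eventually.of_forall fun ω => ?_)
      show |Y ω| * Y ω ^ 2 = |Y ω| ^ 3
      rw [← sq_abs]; ring
    have hR1 : ∫ ω, |Y ω| ^ (2:ℝ) ∂μ = B := by
      refine integral_congr_ae (Filter.Eventually.of_forall fun ω => ?_)
      show |Y ω| ^ (2:ℝ) = Y ω ^ 2
      rw [hr2, sq_abs]
    have hR2 : ∫ ω, (Y ω ^ 2) ^ (2:ℝ) ∂μ = D := by
      refine integral_congr_ae (Filter.Eventually.of_forall fun ω => ?_)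
      show (Y ω ^ 2) ^ (2:ℝ) = Y ω ^ 4
      rw [hr2]; ring
    rw [hL, hR1, hR2] at h
    calc T ^ 2 ≤ (B ^ ((1:ℝ)/2) * D ^ ((1:ℝ)/2)) ^ 2 := by
          exact pow_le_pow_left₀ hTnn h 2
      _ = B * D := by
          rw [← Real.sqrt_eq_rpow, ← Real.sqrt_eq_rpow, mul_pow,
            Real.sq_sqrt hBnn, Real.sq_sqrt hDnn]
  -- CS1 : B² ≤ A * T
  have hCS1 : B ^ 2 ≤ A * T := by
    have hmf : AEStronglyMeasurable (fun ω => Real.sqrt |Y ω|) μ :=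
      Real.continuous_sqrt.comp_aestronglyMeasurable hAabs.aestronglyMeasurable
    have hmg : AEStronglyMeasurable (fun ω => |Y ω| * Real.sqrt |Y ω|) μ :=
      hAabs.aestronglyMeasurable.mul hmf
    have hf : MemLp (fun ω => Real.sqrt |Y ω|) (ENNReal.ofReal 2) μ := by
      rw [h2, memLp_two_iff_integrable_sq hmf]
      refine hAabs.congr (Filter.Eventually.of_forall fun ω => ?_)
      show |Y ω| = Real.sqrt |Y ω| ^ 2
      rw [Real.sq_sqrt (abs_nonneg _)]
    have hg : MemLp (fun ω => |Y ω| * Real.sqrt |Y ω|) (ENNReal.ofReal 2) μ := by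
      rw [h2, memLp_two_iff_integrable_sq hmg]
      refine hT3.congr (Filter.Eventually.of_forall fun ω => ?_)
      show |Y ω| ^ 3 = (|Y ω| * Real.sqrt |Y ω|) ^ 2
      rw [mul_pow, Real.sq_sqrt (abs_nonneg _)]; ring
    have h := integral_mul_le_Lp_mul_Lq_of_nonneg hconj
      (Filter.Eventually.of_forall fun ω => Real.sqrt_nonneg _)
      (Filter.Eventually.of_forall fun ω => mul_nonneg (abs_nonneg _) (Real.sqrt_nonneg _))
      hf hg
    have hL : ∫ ω, Real.sqrt |Y ω| * (|Y ω| * Real.sqrt |Y ω|) ∂μ = B := by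
      refine integral_congr_ae (Filter.Eventually.of_forall fun ω => ?_)
      show Real.sqrt |Y ω| * (|Y ω| * Real.sqrt |Y ω|) = Y ω ^ 2
      rw [show Real.sqrt |Y ω| * (|Y ω| * Real.sqrt |Y ω|)
          = Real.sqrt |Y ω| ^ 2 * |Y ω| by ring, Real.sq_sqrt (abs_nonneg _), ← sq_abs]
      ring
    have hR1 : ∫ ω, Real.sqrt |Y ω| ^ (2:ℝ) ∂μ = A := by
      refine integral_congr_ae (Filter.Eventually.of_forall fun ω => ?_)
      show Real.sqrt |Y ω| ^ (2:ℝ) = |Y ω|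
      rw [hr2, Real.sq_sqrt (abs_nonneg _)]
    have hR2 : ∫ ω, (|Y ω| * Real.sqrt |Y ω|) ^ (2:ℝ) ∂μ = T := by
      refine integral_congr_ae (Filter.Eventually.of_forall fun ω => ?_)
      show (|Y ω| * Real.sqrt |Y ω|) ^ (2:ℝ) = |Y ω| ^ 3
      rw [hr2, mul_pow, Real.sq_sqrt (abs_nonneg _)]; ring
    rw [hL, hR1, hR2] at h
    calc B ^ 2 ≤ (A ^ ((1:ℝ)/2) * T ^ ((1:ℝ)/2)) ^ 2 := pow_le_pow_left₀ hBnn h 2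
      _ = A * T := by
          rw [← Real.sqrt_eq_rpow, ← Real.sqrt_eq_rpow, mul_pow,
            Real.sq_sqrt hAnn, Real.sq_sqrt hTnn]
  -- combine : B³ ≤ A² D
  have hkey : B ^ 3 ≤ A ^ 2 * D := by
    rcases eq_or_lt_of_le hBnn with hB0 | hB0
    · have : B ^ 3 = 0 := by rw [← hB0]; ring
      rw [this]; exact mul_nonneg (sq_nonneg A) hDnn
    · have h1 : (B ^ 2) ^ 2 ≤ (A * T) ^ 2 := pow_le_pow_left₀ (sq_nonneg B) hCS1 2
      have h2 : A ^ 2 * T ^ 2 ≤ A ^ 2 * (B * D) :=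
        mul_le_mul_of_nonneg_left hCS2 (sq_nonneg A)
      nlinarith [h1, h2, hB0]
  have hsqrt : (B ^ 3 / D) ^ ((1:ℝ)/2) ≤ A := by
    have h1 : B ^ 3 / D ≤ A ^ 2 := by
      rw [div_le_iff₀ h4pos]; exact hkey
    calc (B ^ 3 / D) ^ ((1:ℝ)/2) = Real.sqrt (B ^ 3 / D) := by
          rw [Real.sqrt_eq_rpow]
      _ ≤ Real.sqrt (A ^ 2) := Real.sqrt_le_sqrt h1
      _ = A := Real.sqrt_sq hAnn
  -- identify the RHS integral
  have hRHS : ∫ ω, |Y ω| * Set.indicator {ω' | Y ω' ≤ 0} (fun _ => (1:ℝ)) ω ∂μ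
      = (A - ∫ ω, Y ω ∂μ) / 2 := by
    have hpt : ∀ ω, |Y ω| * Set.indicator {ω' | Y ω' ≤ 0} (fun _ => (1:ℝ)) ω
        = (|Y ω| - Y ω) / 2 := by
      intro ω
      simp only [Set.indicator_apply, Set.mem_setOf_eq]
      by_cases h : Y ω ≤ 0
      · rw [if_pos h, abs_of_nonpos h]; ring
      · rw [if_neg h, abs_of_pos (lt_of_not_ge h)]; ring
    rw [integral_congr_ae (Filter.Eventually.of_forall hpt), integral_div,
      integral_sub hAabs hY1]
  rw [hRHS]
  linarith
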